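/- Let λ be a strict partition and k ≥ 1, and for 0 ≤ j ≤ k−1 let m_j denote the number of parts of λ congruent to j modulo k. Then every standard shifted k-ribbon tableau of shape λ contains the same number of ribbons having a cell on the main diagonal, namely m_0 + Σ_{1 ≤ i < k/2} min(m_i, m_{k−i}); this common number is called the k-length ℓ^{(k)}(λ) of λ. -/

import Mathlib

def IsStrictPartition (s : Finset ℕ) : Prop := ∀ x ∈ s, 0 < x

/-- The `i`-th largest part of `s` (1-indexed); `0` if out of range. -/
def nthPart (s : Finset ℕ) (i : ℕ) : ℕ := (s.sort (· ≤ ·)).reverse.getD (i - 1) 0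

/-- The shifted diagram: row `i` (1-indexed) has cells `(i, j)` with `i ≤ j ≤ i + λᵢ - 1`. -/
def shiftedDiagram (s : Finset ℕ) : Set (ℕ × ℕ) :=
  {c | 1 ≤ c.1 ∧ c.1 ≤ c.2 ∧ c.2 + 1 ≤ c.1 + nthPart s c.1}

def skewDiag (lam nu : Finset ℕ) : Set (ℕ × ℕ) := shiftedDiagram lam \ shiftedDiagram nu

/-- Diagonal value `j - i + 1` of a cell `(i, j)`. -/
def diagVal (c : ℕ × ℕ) : ℕ := c.2 + 1 - c.1

def CellAdj (c d : ℕ × ℕ) : Prop :=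
  (c.1 = d.1 ∧ (c.2 + 1 = d.2 ∨ d.2 + 1 = c.2)) ∨
  (c.2 = d.2 ∧ (c.1 + 1 = d.1 ∨ d.1 + 1 = c.1))

def EdgeConnected (S : Set (ℕ × ℕ)) : Prop :=
  ∀ c ∈ S, ∀ d ∈ S, Relation.ReflTransGen (fun x y => CellAdj x y ∧ x ∈ S ∧ y ∈ S) c d

def IsHead (S : Set (ℕ × ℕ)) (c : ℕ × ℕ) : Prop :=
  c ∈ S ∧ ∀ d ∈ S, diagVal d ≤ diagVal c

def IsTail (S : Set (ℕ × ℕ)) (c : ℕ × ℕ) : Prop :=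
  c ∈ S ∧ ∀ d ∈ S, diagVal c ≤ diagVal d

def IsRemovableSingleRibbon (lam nu : Finset ℕ) (k : ℕ) : Prop :=
  IsStrictPartition lam ∧ IsStrictPartition nu ∧
  shiftedDiagram nu ⊆ shiftedDiagram lam ∧
  (skewDiag lam nu).ncard = k ∧
  EdgeConnected (skewDiag lam nu) ∧
  Set.InjOn diagVal (skewDiag lam nu)

def IsDoubleDecomp (lam nu : Finset ℕ) (R S : Set (ℕ × ℕ)) : Prop :=
  IsStrictPartition lam ∧ IsStrictPartition nu ∧
  shiftedDiagram nu ⊆ shiftedDiagram lam ∧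
  Disjoint R S ∧ R ∪ S = skewDiag lam nu ∧
  R.Nonempty ∧ EdgeConnected R ∧ Set.InjOn diagVal R ∧
  S.Nonempty ∧ EdgeConnected S ∧ Set.InjOn diagVal S ∧
  S.ncard ≤ R.ncard ∧
  (∃ a, IsTail R (a, a)) ∧ (∃ b, IsTail S (b, b)) ∧
  (∃ mu : Finset ℕ, IsStrictPartition mu ∧ shiftedDiagram mu = shiftedDiagram lam \ R)

def IsRemovableDoubleRibbon (lam nu : Finset ℕ) (k : ℕ) : Prop :=
  (skewDiag lam nu).ncard = k ∧ ∃ R S, IsDoubleDecomp lam nu R S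

def IsRemovableRibbon (lam nu : Finset ℕ) (k : ℕ) : Prop :=
  IsRemovableSingleRibbon lam nu k ∨ IsRemovableDoubleRibbon lam nu k

/-- A standard shifted `k`-ribbon tableau of shape `λ`, as a chain
`f 0 ⊂ f 1 ⊂ ⋯ ⊂ f n = λ` in which `f 0` is a `k`-core (admits no removable `k`-ribbon)
and each `f (i+1) ∖ f i` is a removable `k`-ribbon. -/
def IsStandardRibbonTableau (k : ℕ) (lam : Finset ℕ) (n : ℕ) (f : ℕ → Finset ℕ) : Prop :=
  IsStrictPartition (f 0) ∧ (¬∃ nu : Finset ℕ, IsRemovableRibbon (f 0) nu k) ∧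
  f n = lam ∧ ∀ i < n, IsRemovableRibbon (f (i + 1)) (f i) k

namespace Stmt6

/-- number of parts ≥ d -/
def Fc (s : Finset ℕ) (d : ℕ) : ℕ := (s.filter (fun x => d ≤ x)).card

lemma sorted_getD_iff {L : List ℕ} (hL : L.Pairwise (· ≥ ·)) (i m : ℕ) (hi : 1 ≤ i) (hm : 1 ≤ m) :
    m ≤ L.getD (i-1) 0 ↔ i ≤ (L.filter (fun x => m ≤ x)).length := by
  induction L generalizing i with
  | nil => simp [List.getD]; omega
  | cons a tl ih =>
    have ha : ∀ b ∈ tl, b ≤ a := fun b hb => (List.pairwise_cons.mp hL).1 b hb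
    have htl : tl.Pairwise (· ≥ ·) := (List.pairwise_cons.mp hL).2
    rcases Nat.eq_or_lt_of_le hi with h1 | h2
    · subst h1
      simp only [List.getD_cons_zero, Nat.sub_self]
      constructor
      · intro h
        have : a ∈ (a :: tl).filter (fun x => m ≤ x) := by
          simp [List.mem_filter, h]
        have := List.length_pos_iff.mpr (List.ne_nil_of_mem this)
        omega
      · intro h
        by_contra hma
        have hfil : (a :: tl).filter (fun x => m ≤ x) = [] := by
          apply List.filter_eq_nil_iff.mpr
          intro b hb
          simp only [decide_eq_true_eq]
          simp only [List.mem_cons] at hb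
          rcases hb with hb | hb
          · subst hb; exact hma
          · intro hmb; exact hma (le_trans hmb (ha b hb))
        rw [hfil] at h; simp at h
    · have hgd : (a :: tl).getD (i-1) 0 = tl.getD (i-2) 0 := by
        have : i - 1 = (i-2) + 1 := by omega
        rw [this]; rfl
      rw [hgd]
      by_cases hma : m ≤ a
      · have : (List.filter (fun x => decide (m ≤ x)) (a :: tl)).length
            = (List.filter (fun x => decide (m ≤ x)) tl).length + 1 := by
          simp [List.filter_cons, hma]
        rw [show (a :: tl).filter (fun x => m ≤ x) = (a :: tl).filter (fun x => decide (m ≤ x)) from rfl]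
        rw [this]
        constructor
        · intro h
          have := (ih htl (i-1) (by omega)).mp (by simpa [show i-1-1 = i-2 by omega] using h)
          omega
        · intro h
          have := (ih htl (i-1) (by omega)).mpr (by omega)
          simpa [show i-1-1 = i-2 by omega] using this
      · have hfil : tl.filter (fun x => m ≤ x) = [] := by
          apply List.filter_eq_nil_iff.mpr
          intro b hb
          simp only [decide_eq_true_eq]
          intro hmb; exact hma (le_trans hmb (ha b hb))
        have hfil2 : (a :: tl).filter (fun x => m ≤ x) = [] := by
          rw [List.filter_cons]
          simp [hma, hfil]
        rw [hfil2]
        simp only [List.length_nil]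
        constructor
        · intro h
          exfalso
          rcases Nat.lt_or_ge (i-2) tl.length with hlt | hge
          · have : tl.getD (i-2) 0 ∈ tl := by
              rw [List.getD_eq_getElem _ _ hlt]; exact List.getElem_mem _
            exact hma (le_trans h (ha _ this))
          · rw [List.getD_eq_default _ _ hge] at h; omega
        · omega

lemma nthPart_ge_iff (s : Finset ℕ) {i m : ℕ} (hi : 1 ≤ i) (hm : 1 ≤ m) :
    m ≤ nthPart s i ↔ i ≤ Fc s m := by
  have hs : (s.sort (· ≤ ·)).reverse.Pairwise (· ≥ ·) :=
    List.pairwise_reverse.2 (s.pairwise_sort (· ≤ ·))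
  rw [nthPart, sorted_getD_iff hs i m hi hm]
  have hlen : (((s.sort (· ≤ ·)).reverse).filter (fun x => m ≤ x)).length = Fc s m := by
    rw [List.filter_reverse, List.length_reverse]
    have h1 : ((s.sort (· ≤ ·)).filter (fun x => decide (m ≤ x)) : Multiset ℕ)
        = (s.filter (fun x => m ≤ x)).val := by
      rw [← Multiset.filter_coe, Finset.sort_eq]
      rfl
    have := congrArg Multiset.card h1
    simp only [Multiset.coe_card] at this; exact this
  rw [hlen]

lemma mem_sd {s : Finset ℕ} {i j : ℕ} :
    (i, j) ∈ shiftedDiagram s ↔ 1 ≤ i ∧ i ≤ j ∧ i ≤ Fc s (j - i + 1) := by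
  constructor
  · rintro ⟨h1, h2, h3⟩
    refine ⟨h1, h2, ?_⟩
    exact (nthPart_ge_iff s h1 (by omega)).mp (by simp only at h3 ⊢; omega)
  · rintro ⟨h1, h2, h3⟩
    refine ⟨h1, h2, ?_⟩
    have := (nthPart_ge_iff s h1 (show 1 ≤ j - i + 1 by omega)).mpr h3
    simp only at this ⊢
    omega

lemma mem_sd' {s : Finset ℕ} {c : ℕ × ℕ} :
    c ∈ shiftedDiagram s ↔ 1 ≤ c.1 ∧ c.1 ≤ c.2 ∧ c.1 ≤ Fc s (diagVal c) := by
  obtain ⟨i, j⟩ := c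
  rw [mem_sd]
  simp only [diagVal]
  constructor
  · rintro ⟨h1,h2,h3⟩; exact ⟨h1,h2, by rwa [show j + 1 - i = j - i + 1 by omega]⟩
  · rintro ⟨h1,h2,h3⟩; exact ⟨h1,h2, by rwa [show j - i + 1 = j + 1 - i by omega]⟩

lemma mem_skew {lam nu : Finset ℕ} {c : ℕ × ℕ} :
    c ∈ skewDiag lam nu ↔ 1 ≤ c.1 ∧ c.1 ≤ c.2 ∧ Fc nu (diagVal c) < c.1 ∧ c.1 ≤ Fc lam (diagVal c) := by
  rw [skewDiag, Set.mem_diff, mem_sd', mem_sd']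
  constructor
  · rintro ⟨⟨h1,h2,h3⟩, h4⟩
    refine ⟨h1, h2, ?_, h3⟩
    by_contra h
    exact h4 ⟨h1, h2, by omega⟩
  · rintro ⟨h1,h2,h3,h4⟩
    exact ⟨⟨h1,h2,h4⟩, fun h => by omega⟩

lemma Fc_succ (s : Finset ℕ) (d : ℕ) :
    Fc s d = Fc s (d+1) + (if d ∈ s then 1 else 0) := by
  unfold Fc
  by_cases h : d ∈ s
  · rw [if_pos h]
    have : s.filter (fun x => d ≤ x) = insert d (s.filter (fun x => d+1 ≤ x)) := by
      ext x
      simp only [Finset.mem_filter, Finset.mem_insert]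
      constructor
      · rintro ⟨hx, hdx⟩
        rcases Nat.eq_or_lt_of_le hdx with h1 | h2
        · left; omega
        · right; exact ⟨hx, h2⟩
      · rintro (rfl | ⟨hx, hdx⟩)
        · exact ⟨h, le_refl _⟩
        · exact ⟨hx, by omega⟩
    rw [this, Finset.card_insert_of_notMem (by simp)]
  · rw [if_neg h]
    have : s.filter (fun x => d ≤ x) = s.filter (fun x => d+1 ≤ x) := by
      apply Finset.filter_congr
      intro x hx
      constructor
      · intro hdx
        rcases Nat.eq_or_lt_of_le hdx with h1 | h2
        · exact absurd (h1 ▸ hx) h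
        · exact h2
      · omega
    rw [this]
    omega

lemma Fc_anti (s : Finset ℕ) {d e : ℕ} (h : d ≤ e) : Fc s e ≤ Fc s d := by
  apply Finset.card_le_card
  intro x hx
  simp only [Finset.mem_filter] at hx ⊢
  exact ⟨hx.1, le_trans h hx.2⟩

lemma Fc_le_card (s : Finset ℕ) (d : ℕ) : Fc s d ≤ s.card :=
  Finset.card_le_card (Finset.filter_subset _ _)

lemma Fc_eq_zero (s : Finset ℕ) {d : ℕ} (h : s.sup id < d) : Fc s d = 0 := by
  unfold Fc
  rw [Finset.card_eq_zero]
  apply Finset.filter_eq_empty_iff.mpr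
  intro x hx
  have : x ≤ s.sup id := Finset.le_sup (f := id) hx
  omega

lemma mem_iff_Fc {s : Finset ℕ} {d : ℕ} : d ∈ s ↔ Fc s (d+1) < Fc s d := by
  rw [Fc_succ s d]
  by_cases h : d ∈ s <;> simp [h]

lemma Fc_drop (s : Finset ℕ) (d : ℕ) : Fc s d ≤ Fc s (d+1) + 1 := by
  rw [Fc_succ s d]; split <;> omega

end Stmt6

namespace Stmt6

lemma sd_finite (s : Finset ℕ) : (shiftedDiagram s).Finite := by
  apply Set.Finite.subset (Set.finite_Icc (1,1) (s.card, s.card + s.sup id))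
  rintro ⟨i, j⟩ hc
  rw [mem_sd] at hc
  obtain ⟨h1, h2, h3⟩ := hc
  have hi : i ≤ s.card := le_trans h3 (Fc_le_card _ _)
  have hd : j - i + 1 ≤ s.sup id := by
    by_contra h
    rw [Fc_eq_zero s (by omega)] at h3
    omega
  constructor <;> constructor <;> simp <;> omega

lemma skew_finite (lam nu : Finset ℕ) : (skewDiag lam nu).Finite :=
  Set.Finite.subset (sd_finite lam) (fun c hc => hc.1)

lemma adj_diag {c d : ℕ × ℕ} (hc : 1 ≤ c.1 ∧ c.1 ≤ c.2) (hd : 1 ≤ d.1 ∧ d.1 ≤ d.2)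
    (h : CellAdj c d) : diagVal d = diagVal c + 1 ∨ diagVal c = diagVal d + 1 := by
  obtain ⟨i, j⟩ := c; obtain ⟨i', j'⟩ := d
  simp only [CellAdj, diagVal] at *
  omega

lemma cells_ok {lam nu : Finset ℕ} {c : ℕ × ℕ} (h : c ∈ skewDiag lam nu) :
    1 ≤ c.1 ∧ c.1 ≤ c.2 := by
  rw [mem_skew] at h; exact ⟨h.1, h.2.1⟩

/-- Along a path in `S`, every diagonal value between the endpoints' is attained. -/
lemma path_diag {S : Set (ℕ × ℕ)} (hS : ∀ c ∈ S, 1 ≤ c.1 ∧ c.1 ≤ c.2)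
    {c d : ℕ × ℕ} (h : Relation.ReflTransGen (fun x y => CellAdj x y ∧ x ∈ S ∧ y ∈ S) c d)
    (hc : c ∈ S) :
    ∀ e, ((diagVal c ≤ e ∧ e ≤ diagVal d) ∨ (diagVal d ≤ e ∧ e ≤ diagVal c)) →
      ∃ x ∈ S, diagVal x = e := by
  induction h with
  | refl =>
    intro e he
    exact ⟨c, hc, by omega⟩
  | @tail b d' hab hstep ih =>
    intro e he
    have hbS : b ∈ S := hstep.2.1
    have hdS : d' ∈ S := hstep.2.2
    have hdiag := adj_diag (hS b hbS) (hS d' hdS) hstep.1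
    by_cases hcase : (diagVal c ≤ e ∧ e ≤ diagVal b) ∨ (diagVal b ≤ e ∧ e ≤ diagVal c)
    · exact ih e hcase
    · have : e = diagVal d' := by omega
      exact ⟨d', hdS, this.symm⟩

/-- every length-k window contains exactly one element ≡ j (mod k), for j < k -/
lemma window_count (k : ℕ) (hk : 1 ≤ k) (j : ℕ) (hj : j < k) :
    ∀ a, ((Finset.Ico a (a+k)).filter (fun d => d % k = j)).card = 1 := by
  intro a
  induction a with
  | zero =>
    have : (Finset.Ico 0 (0+k)).filter (fun d => d % k = j) = {j} := by
      ext d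
      simp only [Finset.mem_filter, Finset.mem_Ico, Finset.mem_singleton]
      constructor
      · rintro ⟨⟨_, hd⟩, hmod⟩
        rw [Nat.mod_eq_of_lt (by omega)] at hmod
        exact hmod
      · rintro rfl
        exact ⟨⟨Nat.zero_le _, by omega⟩, Nat.mod_eq_of_lt hj⟩
    rw [this]; rfl
  | succ a ih =>
    have hsplit1 : Finset.Ico a (a+1+k) = insert a (Finset.Ico (a+1) (a+1+k)) := by
      ext x
      simp only [Finset.mem_Ico, Finset.mem_insert]
      omega
    have hsplit2 : Finset.Ico a (a+1+k) = insert (a+k) (Finset.Ico a (a+k)) := by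
      ext x
      simp only [Finset.mem_Ico, Finset.mem_insert]
      omega
    have h1 : ((Finset.Ico a (a+1+k)).filter (fun d => d % k = j)).card
        = ((Finset.Ico (a+1) (a+1+k)).filter (fun d => d % k = j)).card
          + (if a % k = j then 1 else 0) := by
      rw [hsplit1, Finset.filter_insert]
      by_cases haj : a % k = j
      · rw [if_pos haj, if_pos haj, Finset.card_insert_of_notMem (by simp)]
      · rw [if_neg haj, if_neg haj]; omega
    have h2 : ((Finset.Ico a (a+1+k)).filter (fun d => d % k = j)).card
        = ((Finset.Ico a (a+k)).filter (fun d => d % k = j)).card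
          + (if (a+k) % k = j then 1 else 0) := by
      rw [hsplit2, Finset.filter_insert]
      by_cases haj : (a+k) % k = j
      · rw [if_pos haj, if_pos haj, Finset.card_insert_of_notMem (by simp)]
      · rw [if_neg haj, if_neg haj]; omega
    rw [Nat.add_mod_right] at h2
    omega

end Stmt6

namespace Stmt6

lemma cell_mem_skew {lam nu : Finset ℕ} {i d : ℕ} (hd : 1 ≤ d) (hi : 1 ≤ i)
    (h1 : Fc nu d < i) (h2 : i ≤ Fc lam d) : (i, i + d - 1) ∈ skewDiag lam nu := by
  have hdv : diagVal (i, i + d - 1) = d := by simp only [diagVal]; omega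
  rw [mem_skew, hdv]
  exact ⟨hi, by omega, h1, h2⟩

lemma skew_cell_form {lam nu : Finset ℕ} {c : ℕ × ℕ} (hc : c ∈ skewDiag lam nu) :
    1 ≤ diagVal c ∧ Fc nu (diagVal c) < c.1 ∧ c.1 ≤ Fc lam (diagVal c)
      ∧ c = (c.1, c.1 + diagVal c - 1) := by
  rw [mem_skew] at hc
  obtain ⟨h1, h2, h3, h4⟩ := hc
  refine ⟨by simp only [diagVal]; omega, h3, h4, ?_⟩
  have : c.2 = c.1 + diagVal c - 1 := by simp only [diagVal]; omega
  exact Prod.ext rfl this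

lemma diagVal_cell {i d : ℕ} (hd : 1 ≤ d) : diagVal (i, i + d - 1) = d := by
  simp only [diagVal]; omega

lemma single_structure {lam nu : Finset ℕ} {k : ℕ} (hk : 1 ≤ k)
    (h : IsRemovableSingleRibbon lam nu k) :
    ∃ t, 1 ≤ t ∧ ∀ d, 1 ≤ d →
      Fc nu d + (if t ≤ d ∧ d ≤ t + k - 1 then 1 else 0) = Fc lam d := by
  obtain ⟨hl, hn, hsub, hcard, hconn, hinj⟩ := h
  have hFle : ∀ d, 1 ≤ d → Fc nu d ≤ Fc lam d := by
    intro d hd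
    rcases Nat.eq_zero_or_pos (Fc nu d) with h0 | hpos
    · omega
    · have hmem : ((Fc nu d, Fc nu d + d - 1) : ℕ×ℕ) ∈ shiftedDiagram nu := by
        rw [mem_sd]
        exact ⟨hpos, by omega, by rw [show Fc nu d + d - 1 - Fc nu d + 1 = d by omega]⟩
      have h2 := hsub hmem
      rw [mem_sd, show Fc nu d + d - 1 - Fc nu d + 1 = d by omega] at h2
      exact h2.2.2
  have hG1 : ∀ d, 1 ≤ d → Fc lam d ≤ Fc nu d + 1 := by
    intro d hd
    by_contra hcon
    push_neg at hcon
    have hc1 := cell_mem_skew (lam := lam) (nu := nu) hd (i := Fc lam d) (by omega) (by omega) le_rfl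
    have hc2 := cell_mem_skew (lam := lam) (nu := nu) hd (i := Fc lam d - 1) (by omega) (by omega) (by omega)
    have := hinj hc1 hc2 (by rw [diagVal_cell hd, diagVal_cell hd])
    have := congrArg Prod.fst this
    simp only at this
    omega
  set D : Set ℕ := {d | 1 ≤ d ∧ Fc nu d < Fc lam d} with hD
  set g : ℕ → ℕ × ℕ := fun d => (Fc lam d, Fc lam d + d - 1) with hg
  have hskew_eq : skewDiag lam nu = g '' D := by
    ext c
    constructor
    · intro hc
      obtain ⟨h1, h2, h3, h4⟩ := skew_cell_form hc
      refine ⟨diagVal c, ⟨h1, by omega⟩, ?_⟩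
      have hc1 : c.1 = Fc lam (diagVal c) := by
        have := hG1 (diagVal c) h1
        have := hFle (diagVal c) h1
        omega
      rw [hg]
      simp only
      rw [← hc1]
      exact h4.symm
    · rintro ⟨d, ⟨hd1, hd2⟩, rfl⟩
      exact cell_mem_skew hd1 (by omega) hd2 le_rfl
  have hinjD : Set.InjOn g D := by
    intro d1 h1 d2 h2 heq
    have e1 : diagVal (g d1) = d1 := diagVal_cell h1.1
    have e2 : diagVal (g d2) = d2 := diagVal_cell h2.1
    rw [← e1, ← e2, heq]
  have hDcard : D.ncard = k := by
    rw [hskew_eq, Set.ncard_image_of_injOn hinjD] at hcard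
    exact hcard
  have hDfin : D.Finite := by
    apply Set.Finite.subset (Set.finite_Icc 1 (lam.sup id))
    intro d hd
    simp only [Set.mem_Icc]
    refine ⟨hd.1, ?_⟩
    by_contra hcon
    have := Fc_eq_zero lam (d := d) (by omega)
    have := hd.2
    omega
  have hDne : D.Nonempty := by
    apply Set.nonempty_of_ncard_ne_zero
    omega
  have hint : ∀ d1 ∈ D, ∀ d2 ∈ D, ∀ e, d1 ≤ e → e ≤ d2 → e ∈ D := by
    intro d1 h1 d2 h2 e he1 he2
    have hm1 : g d1 ∈ skewDiag lam nu := hskew_eq ▸ ⟨d1, h1, rfl⟩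
    have hm2 : g d2 ∈ skewDiag lam nu := hskew_eq ▸ ⟨d2, h2, rfl⟩
    have hpath := hconn _ hm1 _ hm2
    have hok : ∀ c ∈ skewDiag lam nu, 1 ≤ c.1 ∧ c.1 ≤ c.2 := fun c hc => cells_ok hc
    have := path_diag hok hpath hm1 e (by
      rw [diagVal_cell h1.1, diagVal_cell h2.1]
      left; exact ⟨he1, he2⟩)
    obtain ⟨x, hx, hxe⟩ := this
    obtain ⟨hx1, hx2, hx3, _⟩ := skew_cell_form hx
    rw [hxe] at hx1 hx2 hx3
    exact ⟨hx1, by omega⟩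
  -- convert to Finset
  classical
  set DF := hDfin.toFinset with hDF
  have hDFmem : ∀ d, d ∈ DF ↔ d ∈ D := fun d => Set.Finite.mem_toFinset _
  have hDFne : DF.Nonempty := by
    obtain ⟨d, hd⟩ := hDne
    exact ⟨d, (hDFmem d).mpr hd⟩
  have hDFcard : DF.card = k := by
    rw [hDF, ← Set.ncard_coe_finset, Set.Finite.coe_toFinset]
    exact hDcard
  set t := DF.min' hDFne with ht
  set M := DF.max' hDFne with hM
  have htD : t ∈ D := (hDFmem t).mp (DF.min'_mem hDFne)
  have hMD : M ∈ D := (hDFmem M).mp (DF.max'_mem hDFne)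
  have htM : t ≤ M := DF.min'_le M ((hDFmem M).mpr hMD)
  have hDF_Icc : DF = Finset.Icc t M := by
    ext d
    simp only [Finset.mem_Icc]
    constructor
    · intro hd
      exact ⟨DF.min'_le d hd, DF.le_max' d hd⟩
    · rintro ⟨hd1, hd2⟩
      exact (hDFmem d).mpr (hint t htD M hMD d hd1 hd2)
  have hMt : M = t + k - 1 := by
    have := hDFcard
    rw [hDF_Icc, Nat.card_Icc] at this
    omega
  refine ⟨t, htD.1, ?_⟩
  intro d hd
  have hdD : d ∈ D ↔ (t ≤ d ∧ d ≤ t + k - 1) := by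
    rw [← hDFmem, hDF_Icc, Finset.mem_Icc, hMt]
  by_cases hc : t ≤ d ∧ d ≤ t + k - 1
  · rw [if_pos hc]
    have hdin : d ∈ D := hdD.mpr hc
    have := hdin.2
    have := hG1 d hd
    omega
  · rw [if_neg hc]
    have : ¬ (Fc nu d < Fc lam d) := fun hlt => hc (hdD.mp ⟨hd, hlt⟩)
    have := hFle d hd
    omega

end Stmt6

namespace Stmt6

lemma count_shift (a b : ℕ) (P : ℕ → Prop) [DecidablePred P] :
    ((Finset.Icc (a+1) (b+1)).filter (fun e => P (e-1))).card
      = ((Finset.Icc a b).filter P).card := by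
  refine Finset.card_bij' (fun e _ => e - 1) (fun d _ => d + 1) ?_ ?_ ?_ ?_
  · intro e he
    simp only [Finset.mem_filter, Finset.mem_Icc] at he ⊢
    exact ⟨⟨by omega, by omega⟩, he.2⟩
  · intro d hd
    simp only [Finset.mem_filter, Finset.mem_Icc] at hd ⊢
    refine ⟨⟨by omega, by omega⟩, ?_⟩
    simpa using hd.2
  · intro e he
    simp only [Finset.mem_filter, Finset.mem_Icc] at he
    omega
  · intro d _
    omega

lemma count_small {m j k : ℕ} (hm : m < k) (hj : j < k) :
    ((Finset.Icc 1 m).filter (fun d => d % k = j)).card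
      = if 1 ≤ j ∧ j ≤ m then 1 else 0 := by
  by_cases hc : 1 ≤ j ∧ j ≤ m
  · rw [if_pos hc]
    have : (Finset.Icc 1 m).filter (fun d => d % k = j) = {j} := by
      ext d
      simp only [Finset.mem_filter, Finset.mem_Icc, Finset.mem_singleton]
      constructor
      · rintro ⟨⟨h1, h2⟩, h3⟩
        rwa [Nat.mod_eq_of_lt (by omega)] at h3
      · rintro rfl
        exact ⟨⟨hc.1, hc.2⟩, Nat.mod_eq_of_lt hj⟩
    rw [this]; rfl
  · rw [if_neg hc]
    rw [Finset.card_eq_zero]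
    apply Finset.filter_eq_empty_iff.mpr
    intro d hd
    simp only [Finset.mem_Icc] at hd
    rw [Nat.mod_eq_of_lt (by omega)]
    omega

lemma window_full {t k j : ℕ} (ht : 1 ≤ t) (hk : 1 ≤ k) (hj : j < k) :
    ((Finset.Icc t (t+k-1)).filter (fun d => d % k = j)).card = 1 := by
  have : Finset.Icc t (t+k-1) = Finset.Ico t (t+k) := by
    ext d; simp only [Finset.mem_Icc, Finset.mem_Ico]; omega
  rw [this]
  exact window_count k hk j hj t

/-- Key summation lemma: effect of a window identity on residue counts. -/
lemma mcount_window {lam nu : Finset ℕ} {t L : ℕ} (ht : 1 ≤ t) (hL : 1 ≤ L)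
    (hid : ∀ d, 1 ≤ d → Fc nu d + (if t ≤ d ∧ d ≤ t + L - 1 then 1 else 0) = Fc lam d)
    (hlpos : IsStrictPartition lam) (hnpos : IsStrictPartition nu)
    (P : ℕ → Prop) [DecidablePred P] :
    (nu.filter (fun p => P p)).card + ((Finset.Icc t (t+L-1)).filter (fun d => P d)).card
      = (lam.filter (fun p => P p)).card
        + ((Finset.Icc t (t+L-1)).filter (fun e => 2 ≤ e ∧ P (e-1))).card := by
  classical
  set B := lam.sup id + nu.sup id + t + L + 2 with hB
  have hBl : ∀ x ∈ lam, 1 ≤ x ∧ x ≤ B := by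
    intro x hx
    exact ⟨hlpos x hx, by have := Finset.le_sup (f := id) hx; simp at this; omega⟩
  have hBn : ∀ x ∈ nu, 1 ≤ x ∧ x ≤ B := by
    intro x hx
    exact ⟨hnpos x hx, by have := Finset.le_sup (f := id) hx; simp at this; omega⟩
  have E1 : (nu.filter (fun p => P p)).card
      = ∑ d ∈ Finset.Icc 1 B, (if d ∈ nu ∧ P d then 1 else 0) := by
    rw [← Finset.card_filter]
    congr 1
    ext d
    simp only [Finset.mem_filter, Finset.mem_Icc]
    constructor
    · rintro ⟨h1, h2⟩; exact ⟨hBn d h1, h1, h2⟩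
    · rintro ⟨_, h1, h2⟩; exact ⟨h1, h2⟩
  have E2 : (lam.filter (fun p => P p)).card
      = ∑ d ∈ Finset.Icc 1 B, (if d ∈ lam ∧ P d then 1 else 0) := by
    rw [← Finset.card_filter]
    congr 1
    ext d
    simp only [Finset.mem_filter, Finset.mem_Icc]
    constructor
    · rintro ⟨h1, h2⟩; exact ⟨hBl d h1, h1, h2⟩
    · rintro ⟨_, h1, h2⟩; exact ⟨h1, h2⟩
  have E3 : ((Finset.Icc t (t+L-1)).filter (fun d => P d)).card
      = ∑ d ∈ Finset.Icc 1 B, (if (t ≤ d ∧ d ≤ t + L - 1) ∧ P d then 1 else 0) := by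
    rw [← Finset.card_filter]
    congr 1
    ext d
    simp only [Finset.mem_filter, Finset.mem_Icc]
    constructor
    · rintro ⟨⟨h1, h2⟩, h3⟩; exact ⟨⟨by omega, by omega⟩, ⟨h1, h2⟩, h3⟩
    · rintro ⟨_, h1, h2⟩; exact ⟨h1, h2⟩
  have E4 : ((Finset.Icc t (t+L-1)).filter (fun e => 2 ≤ e ∧ P (e-1))).card
      = ∑ d ∈ Finset.Icc 1 B, (if (t ≤ d+1 ∧ d+1 ≤ t + L - 1) ∧ P d then 1 else 0) := by
    rw [← Finset.card_filter]
    refine Finset.card_bij' (fun e _ => e - 1) (fun d _ => d + 1) ?_ ?_ ?_ ?_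
    · intro e he
      simp only [Finset.mem_filter, Finset.mem_Icc] at he ⊢
      obtain ⟨⟨h1, h2⟩, h3, h4⟩ := he
      refine ⟨⟨by omega, by omega⟩, ⟨by omega, by omega⟩, h4⟩
    · intro d hd
      simp only [Finset.mem_filter, Finset.mem_Icc] at hd ⊢
      obtain ⟨⟨h1, h2⟩, ⟨h3, h4⟩, h5⟩ := hd
      exact ⟨⟨by omega, by omega⟩, by omega, by simpa using h5⟩
    · intro e he
      simp only [Finset.mem_filter, Finset.mem_Icc] at he
      omega
    · intro d _
      omega
  rw [E1, E2, E3, E4, ← Finset.sum_add_distrib, ← Finset.sum_add_distrib]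
  apply Finset.sum_congr rfl
  intro d hd
  simp only [Finset.mem_Icc] at hd
  have key : (if d ∈ nu then 1 else 0 : ℕ) + (if t ≤ d ∧ d ≤ t + L - 1 then 1 else 0)
      = (if d ∈ lam then 1 else 0) + (if t ≤ d+1 ∧ d+1 ≤ t + L - 1 then 1 else 0) := by
    have h1 := hid d (by omega)
    have h2 := hid (d+1) (by omega)
    have h3 := Fc_succ nu d
    have h4 := Fc_succ lam d
    split_ifs at * <;> omega
  by_cases hP : P d
  · simpa [hP] using key
  · simp [hP]

/-- residue count effect for a single ribbon (window `[t, t+k-1]`). -/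
lemma mcount_single {lam nu : Finset ℕ} {t k : ℕ} (ht : 1 ≤ t) (hk : 1 ≤ k)
    (hid : ∀ d, 1 ≤ d → Fc nu d + (if t ≤ d ∧ d ≤ t + k - 1 then 1 else 0) = Fc lam d)
    (hlpos : IsStrictPartition lam) (hnpos : IsStrictPartition nu)
    {j : ℕ} (hj : j < k) :
    (nu.filter (fun p => p % k = j)).card + (if t = 1 ∧ j = 0 then 1 else 0)
      = (lam.filter (fun p => p % k = j)).card := by
  have hmw := mcount_window ht hk hid hlpos hnpos (fun d => d % k = j)
  rw [window_full ht hk hj] at hmw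
  rcases Nat.lt_or_ge t 2 with ht1 | ht2
  · -- t = 1
    have ht1' : t = 1 := by omega
    subst ht1'
    have hW' : ((Finset.Icc 1 (1+k-1)).filter (fun e => 2 ≤ e ∧ (e-1) % k = j)).card
        = if 1 ≤ j ∧ j ≤ k - 1 then 1 else 0 := by
      have h1 : (Finset.Icc 1 (1+k-1)).filter (fun e => 2 ≤ e ∧ (e-1) % k = j)
          = (Finset.Icc ((k-1)+1-(k-1)+1) ((k-1)+1)).filter (fun e => (e-1) % k = j) := by
        ext e
        simp only [Finset.mem_filter, Finset.mem_Icc]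
        constructor
        · rintro ⟨⟨h1, h2⟩, h3, h4⟩; exact ⟨⟨by omega, by omega⟩, h4⟩
        · rintro ⟨⟨h1, h2⟩, h3⟩; exact ⟨⟨by omega, by omega⟩, by omega, h3⟩
      rw [h1, show (k-1)+1-(k-1)+1 = 1+1 by omega, count_shift 1 (k-1) (fun d => d % k = j),
        count_small (by omega) hj]
    rw [hW'] at hmw
    by_cases hj0 : j = 0
    · subst hj0
      rw [if_neg (by omega : ¬(1 ≤ 0 ∧ 0 ≤ k - 1))] at hmw
      rw [if_pos (show (1:ℕ) = 1 ∧ (0:ℕ) = 0 from ⟨rfl, rfl⟩)]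
      omega
    · rw [if_pos (by omega : 1 ≤ j ∧ j ≤ k - 1)] at hmw
      rw [if_neg (by simp [hj0])]
      omega
  · -- t ≥ 2
    have hW' : ((Finset.Icc t (t+k-1)).filter (fun e => 2 ≤ e ∧ (e-1) % k = j)).card = 1 := by
      have h1 : (Finset.Icc t (t+k-1)).filter (fun e => 2 ≤ e ∧ (e-1) % k = j)
          = (Finset.Icc ((t-1)+1) ((t+k-2)+1)).filter (fun e => (e-1) % k = j) := by
        ext e
        simp only [Finset.mem_filter, Finset.mem_Icc]
        constructor
        · rintro ⟨⟨h1, h2⟩, h3, h4⟩; exact ⟨⟨by omega, by omega⟩, h4⟩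
        · rintro ⟨⟨h1, h2⟩, h3⟩; exact ⟨⟨by omega, by omega⟩, by omega, h3⟩
      rw [h1, count_shift (t-1) (t+k-2) (fun d => d % k = j)]
      have h2 : t+k-2 = (t-1) + k - 1 := by omega
      rw [h2]
      exact window_full (by omega) hk hj
    rw [hW'] at hmw
    rw [if_neg (by omega : ¬(t = 1 ∧ j = 0))]
    omega

/-- residue count effect for deleting a short window `[1, p]` with `p < k`. -/
lemma mcount_sub {lam nu : Finset ℕ} {p k : ℕ} (hp : 1 ≤ p) (hpk : p < k)
    (hid : ∀ d, 1 ≤ d → Fc nu d + (if 1 ≤ d ∧ d ≤ 1 + p - 1 then 1 else 0) = Fc lam d)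
    (hlpos : IsStrictPartition lam) (hnpos : IsStrictPartition nu)
    {j : ℕ} (hj : j < k) :
    (nu.filter (fun q => q % k = j)).card + (if j = p then 1 else 0)
      = (lam.filter (fun q => q % k = j)).card := by
  have hmw := mcount_window (le_refl 1) hp hid hlpos hnpos (fun d => d % k = j)
  have hW : ((Finset.Icc 1 (1+p-1)).filter (fun d => d % k = j)).card
      = if 1 ≤ j ∧ j ≤ p then 1 else 0 := by
    rw [show 1+p-1 = p by omega]
    exact count_small hpk hj
  have hW' : ((Finset.Icc 1 (1+p-1)).filter (fun e => 2 ≤ e ∧ (e-1) % k = j)).card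
      = if 1 ≤ j ∧ j ≤ p - 1 then 1 else 0 := by
    have h1 : (Finset.Icc 1 (1+p-1)).filter (fun e => 2 ≤ e ∧ (e-1) % k = j)
        = (Finset.Icc (1+1) ((p-1)+1)).filter (fun e => (e-1) % k = j) := by
      ext e
      simp only [Finset.mem_filter, Finset.mem_Icc]
      constructor
      · rintro ⟨⟨h1, h2⟩, h3, h4⟩; exact ⟨⟨by omega, by omega⟩, h4⟩
      · rintro ⟨⟨h1, h2⟩, h3⟩; exact ⟨⟨by omega, by omega⟩, by omega, h3⟩
    rw [h1, count_shift 1 (p-1) (fun d => d % k = j), count_small (by omega) hj]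
  rw [hW, hW'] at hmw
  by_cases hjp : j = p
  · subst hjp
    rw [if_pos rfl]
    rw [if_pos (by omega), if_neg (by omega)] at hmw
    omega
  · rw [if_neg hjp]
    by_cases hjr : 1 ≤ j ∧ j ≤ p - 1
    · rw [if_pos (by omega), if_pos hjr] at hmw
      omega
    · rw [if_neg (by omega), if_neg hjr] at hmw
      omega

end Stmt6

namespace Stmt6

def Lk (k : ℕ) (s : Finset ℕ) : ℕ :=
  (s.filter (fun p => p % k = 0)).card
    + ∑ i ∈ (Finset.Ico 1 k).filter (fun i => 2 * i < k),
        min ((s.filter (fun p => p % k = i)).card) ((s.filter (fun p => p % k = k - i)).card)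

lemma diag_cell_iff {lam nu : Finset ℕ} :
    (∃ j, (j, j) ∈ skewDiag lam nu) ↔ Fc nu 1 < Fc lam 1 := by
  constructor
  · rintro ⟨j, hj⟩
    rw [mem_skew] at hj
    have hdv : diagVal (j, j) = 1 := by simp [diagVal]
    rw [hdv] at hj
    omega
  · intro h
    refine ⟨Fc lam 1, ?_⟩
    have := cell_mem_skew (lam := lam) (nu := nu) (d := 1) (i := Fc lam 1) le_rfl (by omega) h le_rfl
    rwa [show Fc lam 1 + 1 - 1 = Fc lam 1 by omega] at this

lemma tail_t_one {lam nu : Finset ℕ} {t k a : ℕ} (hk : 1 ≤ k) (ht : 1 ≤ t)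
    (hid : ∀ d, 1 ≤ d → Fc nu d + (if t ≤ d ∧ d ≤ t + k - 1 then 1 else 0) = Fc lam d)
    (hmem : (a, a) ∈ skewDiag lam nu) : t = 1 := by
  rw [mem_skew] at hmem
  have hdv : diagVal (a, a) = 1 := by simp [diagVal]
  rw [hdv] at hmem
  have := hid 1 le_rfl
  by_contra hne
  rw [if_neg (by omega)] at this
  omega

open Classical in
/-- The step lemma: removing one `k`-ribbon changes `Lk` by the diagonal indicator. -/
lemma step_lemma {k : ℕ} (hk : 1 ≤ k) {lam nu : Finset ℕ}
    (h : IsRemovableRibbon lam nu k) :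
    Lk k lam = Lk k nu + (if ∃ j, (j, j) ∈ skewDiag lam nu then 1 else 0) := by
  classical
  rcases h with hs | hd
  · -- single ribbon
    obtain ⟨t, ht, hid⟩ := single_structure hk hs
    obtain ⟨hl, hn, _, _, _, _⟩ := hs
    have hm : ∀ j, j < k → (nu.filter (fun p => p % k = j)).card
        + (if t = 1 ∧ j = 0 then 1 else 0) = (lam.filter (fun p => p % k = j)).card :=
      fun j hj => mcount_single ht hk hid hl hn hj
    by_cases ht1 : t = 1
    · subst ht1
      have hdiag : ∃ j, (j, j) ∈ skewDiag lam nu := by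
        rw [diag_cell_iff]
        have := hid 1 le_rfl
        rw [if_pos (by omega)] at this
        omega
      rw [if_pos hdiag]
      unfold Lk
      have h0 := hm 0 (by omega)
      rw [if_pos ⟨rfl, rfl⟩] at h0
      have hsum : ∑ i ∈ (Finset.Ico 1 k).filter (fun i => 2 * i < k),
            min ((lam.filter (fun p => p % k = i)).card) ((lam.filter (fun p => p % k = k - i)).card)
          = ∑ i ∈ (Finset.Ico 1 k).filter (fun i => 2 * i < k),
            min ((nu.filter (fun p => p % k = i)).card) ((nu.filter (fun p => p % k = k - i)).card) := by
        apply Finset.sum_congr rfl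
        intro i hi
        simp only [Finset.mem_filter, Finset.mem_Ico] at hi
        have h1 := hm i (by omega)
        rw [if_neg (by omega)] at h1
        have h2 := hm (k - i) (by omega)
        rw [if_neg (by omega)] at h2
        omega
      omega
    · have hdiag : ¬ ∃ j, (j, j) ∈ skewDiag lam nu := by
        rw [diag_cell_iff]
        have := hid 1 le_rfl
        rw [if_neg (by omega)] at this
        omega
      rw [if_neg hdiag]
      unfold Lk
      have h0 := hm 0 (by omega)
      rw [if_neg (by simp [ht1])] at h0
      have hsum : ∑ i ∈ (Finset.Ico 1 k).filter (fun i => 2 * i < k),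
            min ((lam.filter (fun p => p % k = i)).card) ((lam.filter (fun p => p % k = k - i)).card)
          = ∑ i ∈ (Finset.Ico 1 k).filter (fun i => 2 * i < k),
            min ((nu.filter (fun p => p % k = i)).card) ((nu.filter (fun p => p % k = k - i)).card) := by
        apply Finset.sum_congr rfl
        intro i hi
        simp only [Finset.mem_filter, Finset.mem_Ico] at hi
        have h1 := hm i (by omega)
        rw [if_neg (by simp [ht1])] at h1
        have h2 := hm (k - i) (by omega)
        rw [if_neg (by simp [ht1])] at h2
        omega
      omega
  · -- double ribbon
    obtain ⟨hcard, R, S, hl, hn, hsub, hdisj, hunion, hRne, hRconn, hRinj, hSne, hSconn,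
      hSinj, hcardle, ⟨a, hRtail⟩, ⟨b, hStail⟩, mu, hmu, hmueq⟩ := hd
    have hskewfin := skew_finite lam nu
    have hRsub : R ⊆ skewDiag lam nu := hunion ▸ Set.subset_union_left
    have hSsub : S ⊆ skewDiag lam nu := hunion ▸ Set.subset_union_right
    have hRfin : R.Finite := hskewfin.subset hRsub
    have hSfin : S.Finite := hskewfin.subset hSsub
    have hRdiag : R ⊆ shiftedDiagram lam := fun x hx => (hRsub hx).1
    have hReq : R = skewDiag lam mu := by
      rw [skewDiag, hmueq]
      ext x
      constructor
      · intro hx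
        exact ⟨hRdiag hx, fun hx2 => hx2.2 hx⟩
      · rintro ⟨hx1, hx2⟩
        by_contra hxR
        exact hx2 ⟨hx1, hxR⟩
    have hmusub : shiftedDiagram mu ⊆ shiftedDiagram lam := by
      rw [hmueq]; exact Set.diff_subset
    set p := R.ncard with hp
    have hp1 : 1 ≤ p := by
      have := (Set.ncard_pos hRfin).mpr hRne
      omega
    have hRsingle : IsRemovableSingleRibbon lam mu p := by
      refine ⟨hl, hmu, hmusub, by rw [← hReq], ?_, ?_⟩
      · rw [← hReq]; exact hRconn
      · rw [← hReq]; exact hRinj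
    obtain ⟨tR, htR, hidR⟩ := single_structure hp1 hRsingle
    have htR1 : tR = 1 := tail_t_one hp1 htR hidR (hReq ▸ hRtail.1)
    subst htR1
    -- S = skewDiag mu nu
    have hnusub : shiftedDiagram nu ⊆ shiftedDiagram mu := by
      intro x hx
      rw [hmueq]
      refine ⟨hsub hx, fun hxR => ?_⟩
      exact (hRsub hxR).2 hx
    have hSeq : S = skewDiag mu nu := by
      rw [skewDiag, hmueq]
      ext x
      constructor
      · intro hx
        have hxskew : x ∈ skewDiag lam nu := hSsub hx
        have hxR : x ∉ R := fun hxR => (Set.disjoint_left.mp hdisj hxR) hx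
        exact ⟨⟨hxskew.1, hxR⟩, hxskew.2⟩
      · rintro ⟨⟨hx1, hx2⟩, hx3⟩
        have : x ∈ skewDiag lam nu := ⟨hx1, hx3⟩
        rw [← hunion] at this
        rcases this with h | h
        · exact absurd h hx2
        · exact h
    set q := S.ncard with hq
    have hq1 : 1 ≤ q := by
      have := (Set.ncard_pos hSfin).mpr hSne
      omega
    have hSsingle : IsRemovableSingleRibbon mu nu q := by
      refine ⟨hmu, hn, hnusub, by rw [← hSeq], ?_, ?_⟩
      · rw [← hSeq]; exact hSconn
      · rw [← hSeq]; exact hSinj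
    obtain ⟨tS, htS, hidS⟩ := single_structure hq1 hSsingle
    have htS1 : tS = 1 := tail_t_one hq1 htS hidS (hSeq ▸ hStail.1)
    subst htS1
    have hpq : p + q = k := by
      rw [← hcard, hunion.symm, Set.ncard_union_eq hdisj hRfin hSfin]
    have hqp : q < p := by
      rcases Nat.lt_or_ge q p with h | h
      · exact h
      · exfalso
        have hqep : q = p := by omega
        have h1 := hidR p (by omega)
        rw [if_pos (by omega)] at h1
        have h2 := hidR (p+1) (by omega)
        rw [if_neg (by omega)] at h2
        have h3 := hidS p (by omega)
        rw [if_pos (by omega)] at h3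
        have h4 := hidS (p+1) (by omega)
        rw [if_neg (by omega)] at h4
        have h5 := Fc_anti nu (show p ≤ p + 1 by omega)
        have h6 := Fc_drop lam p
        omega
    have hpk : p < k := by omega
    have hqk : q < k := by omega
    have hmR : ∀ j, j < k → (mu.filter (fun x => x % k = j)).card
        + (if j = p then 1 else 0) = (lam.filter (fun x => x % k = j)).card :=
      fun j hj => mcount_sub hp1 hpk hidR hl hmu hj
    have hmS : ∀ j, j < k → (nu.filter (fun x => x % k = j)).card
        + (if j = q then 1 else 0) = (mu.filter (fun x => x % k = j)).card :=
      fun j hj => mcount_sub hq1 hqk hidS hmu hn hj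
    have hdiag : ∃ j, (j, j) ∈ skewDiag lam nu := ⟨a, hRsub hRtail.1⟩
    rw [if_pos hdiag]
    unfold Lk
    -- m_0 unchanged
    have h0R := hmR 0 (by omega)
    rw [if_neg (by omega)] at h0R
    have h0S := hmS 0 (by omega)
    rw [if_neg (by omega)] at h0S
    -- the sum: index q changes by 1, others unchanged
    set I := (Finset.Ico 1 k).filter (fun i => 2 * i < k) with hI
    have hqI : q ∈ I := by
      simp only [hI, Finset.mem_filter, Finset.mem_Ico]
      omega
    set fL := fun i => min ((lam.filter (fun x => x % k = i)).card)
        ((lam.filter (fun x => x % k = k - i)).card) with hfL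
    set fN := fun i => min ((nu.filter (fun x => x % k = i)).card)
        ((nu.filter (fun x => x % k = k - i)).card) with hfN
    have hsum_other : ∀ i ∈ I.erase q, fL i = fN i := by
      intro i hi
      have hiq : i ≠ q := Finset.ne_of_mem_erase hi
      have hiI := Finset.mem_of_mem_erase hi
      simp only [hI, Finset.mem_filter, Finset.mem_Ico] at hiI
      have hip : i ≠ p := by omega
      have hkiq : k - i ≠ q := by omega
      have hkip : k - i ≠ p := by omega
      have e1 := hmR i (by omega)
      rw [if_neg hip] at e1
      have e2 := hmS i (by omega)
      rw [if_neg hiq] at e2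
      have e3 := hmR (k - i) (by omega)
      rw [if_neg hkip] at e3
      have e4 := hmS (k - i) (by omega)
      rw [if_neg hkiq] at e4
      simp only [hfL, hfN]
      omega
    have hsum_q : fL q = fN q + 1 := by
      have hkq : k - q = p := by omega
      have e1 := hmR q (by omega)
      rw [if_neg (by omega)] at e1
      have e2 := hmS q (by omega)
      rw [if_pos rfl] at e2
      have e3 := hmR (k - q) (by omega)
      rw [hkq, if_pos rfl] at e3
      have e4 := hmS (k - q) (by omega)
      rw [hkq, if_neg (by omega)] at e4
      simp only [hfL, hfN, hkq]
      omega
    have hsums : ∑ i ∈ I.erase q, fL i = ∑ i ∈ I.erase q, fN i :=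
      Finset.sum_congr rfl hsum_other
    rw [← Finset.add_sum_erase I fL hqI, ← Finset.add_sum_erase I fN hqI, hsums, hsum_q]
    omega

end Stmt6

namespace Stmt6

lemma Fc_pos_of_mem {s : Finset ℕ} {b : ℕ} (hb : b ∈ s) : 1 ≤ Fc s b := by
  have h1 : b ∈ s.filter (fun x => b ≤ x) := Finset.mem_filter.mpr ⟨hb, le_rfl⟩
  exact Finset.card_pos.mpr ⟨b, h1⟩

lemma Fc_erase {s : Finset ℕ} {b : ℕ} (hb : b ∈ s) (d : ℕ) :
    Fc (s.erase b) d + (if d ≤ b then 1 else 0) = Fc s d := by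
  unfold Fc
  rw [Finset.filter_erase]
  by_cases hdb : d ≤ b
  · have hbf : b ∈ s.filter (fun x => d ≤ x) := Finset.mem_filter.mpr ⟨hb, hdb⟩
    rw [if_pos hdb, Finset.card_erase_of_mem hbf]
    have : 1 ≤ (s.filter (fun x => d ≤ x)).card := Finset.card_pos.mpr ⟨b, hbf⟩
    omega
  · rw [if_neg hdb, Finset.erase_eq_of_notMem (fun hc : b ∈ s.filter (fun x => d ≤ x) => hdb (Finset.mem_filter.mp hc).2)]
    omega

lemma Fc_insert {s : Finset ℕ} {a : ℕ} (ha : a ∉ s) (d : ℕ) :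
    Fc (insert a s) d = Fc s d + (if d ≤ a then 1 else 0) := by
  unfold Fc
  rw [Finset.filter_insert]
  by_cases hda : d ≤ a
  · rw [if_pos hda, if_pos hda,
      Finset.card_insert_of_notMem (fun hc => ha (Finset.mem_filter.mp hc).1)]
  · rw [if_neg hda, if_neg hda]
    omega

lemma cellAdj_symm : Symmetric CellAdj := by
  intro c d h
  unfold CellAdj at *
  tauto

/-- Construction of a single ribbon with window `[t, t+L-1]`. -/
lemma single_construct {μ : Finset ℕ} (hμ : IsStrictPartition μ) {t L : ℕ}
    (ht : 1 ≤ t) (hL : 1 ≤ L) (hmem : t + L - 1 ∈ μ) (hnot : 2 ≤ t → t - 1 ∉ μ) :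
    ∃ ν : Finset ℕ, IsRemovableSingleRibbon μ ν L ∧
      (∀ d, 1 ≤ d → Fc ν d + (if t ≤ d ∧ d ≤ t + L - 1 then 1 else 0) = Fc μ d) := by
  classical
  set ν := if 2 ≤ t then insert (t-1) (μ.erase (t+L-1)) else μ.erase (t+L-1) with hν
  have hid : ∀ d, 1 ≤ d → Fc ν d + (if t ≤ d ∧ d ≤ t + L - 1 then 1 else 0) = Fc μ d := by
    intro d hd
    by_cases ht2 : 2 ≤ t
    · rw [hν, if_pos ht2]
      have hins : t - 1 ∉ μ.erase (t+L-1) :=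
        fun hc => (hnot ht2) (Finset.mem_of_mem_erase hc)
      rw [Fc_insert hins d]
      have herase := Fc_erase hmem d
      split_ifs at * <;> omega
    · rw [hν, if_neg ht2]
      have herase := Fc_erase hmem d
      have ht1 : t = 1 := by omega
      subst ht1
      split_ifs at * <;> omega
  have hνstrict : IsStrictPartition ν := by
    intro x hx
    rw [hν] at hx
    by_cases ht2 : 2 ≤ t
    · rw [if_pos ht2] at hx
      rcases Finset.mem_insert.mp hx with rfl | hx2
      · omega
      · exact hμ x (Finset.mem_of_mem_erase hx2)
    · rw [if_neg ht2] at hx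
      exact hμ x (Finset.mem_of_mem_erase hx)
  have hFle : ∀ d, 1 ≤ d → Fc ν d ≤ Fc μ d := by
    intro d hd
    have := hid d hd
    split_ifs at this <;> omega
  have hsubdiag : shiftedDiagram ν ⊆ shiftedDiagram μ := by
    intro c hc
    rw [mem_sd'] at hc ⊢
    have h1 : 1 ≤ diagVal c := by
      obtain ⟨h1, h2, _⟩ := hc
      simp only [diagVal]
      omega
    exact ⟨hc.1, hc.2.1, le_trans hc.2.2 (hFle _ h1)⟩
  have hFpos : ∀ d, 1 ≤ d → d ≤ t + L - 1 → 1 ≤ Fc μ d := by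
    intro d hd1 hd2
    exact le_trans (Fc_pos_of_mem hmem) (Fc_anti μ hd2)
  set g : ℕ → ℕ × ℕ := fun d => (Fc μ d, Fc μ d + d - 1) with hg
  have hcell : ∀ d, t ≤ d → d ≤ t + L - 1 → g d ∈ skewDiag μ ν := by
    intro d hd1 hd2
    have hd : 1 ≤ d := by omega
    have hFp : 1 ≤ Fc μ d := hFpos d hd hd2
    have := hid d hd
    rw [if_pos ⟨hd1, hd2⟩] at this
    exact cell_mem_skew hd hFp (by omega) le_rfl
  have hskew_eq : skewDiag μ ν = g '' (Set.Icc t (t + L - 1)) := by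
    ext c
    constructor
    · intro hc
      obtain ⟨h1, h2, h3, h4⟩ := skew_cell_form hc
      have hidc := hid (diagVal c) h1
      have hwin : t ≤ diagVal c ∧ diagVal c ≤ t + L - 1 := by
        by_contra hcon
        rw [if_neg hcon] at hidc
        omega
      rw [if_pos hwin] at hidc
      refine ⟨diagVal c, hwin, ?_⟩
      rw [hg]
      simp only
      have : c.1 = Fc μ (diagVal c) := by omega
      rw [← this]
      exact h4.symm
    · rintro ⟨d, hd, rfl⟩
      simp only [Set.mem_Icc] at hd
      exact hcell d hd.1 hd.2
  have hdg : ∀ d, 1 ≤ d → diagVal (g d) = d := by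
    intro d hd
    exact diagVal_cell hd
  have hncard : (skewDiag μ ν).ncard = L := by
    rw [hskew_eq]
    rw [Set.ncard_image_of_injOn (fun d1 h1 d2 h2 heq => by
      have e1 := hdg d1 (by have := h1.1; omega)
      have e2 := hdg d2 (by have := h2.1; omega)
      rw [← e1, ← e2, heq])]
    rw [← Finset.coe_Icc, Set.ncard_coe_finset, Nat.card_Icc]
    omega
  have hadjc : ∀ d, t ≤ d → d + 1 ≤ t + L - 1 → CellAdj (g d) (g (d+1)) := by
    intro d hd1 hd2
    have hsucc := Fc_succ μ d
    have hFp : 1 ≤ Fc μ (d+1) := hFpos (d+1) (by omega) hd2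
    simp only [hg, CellAdj]
    split_ifs at hsucc <;> omega
  have hconn : EdgeConnected (skewDiag μ ν) := by
    set r := fun x y => CellAdj x y ∧ x ∈ skewDiag μ ν ∧ y ∈ skewDiag μ ν with hr
    have hrsym : Symmetric r := by
      intro x y ⟨h1, h2, h3⟩
      exact ⟨cellAdj_symm h1, h3, h2⟩
    have hchain : ∀ n d, t ≤ d → d + n ≤ t + L - 1 →
        Relation.ReflTransGen r (g d) (g (d + n)) := by
      intro n
      induction n with
      | zero => intro d _ _; exact Relation.ReflTransGen.refl
      | succ m ih =>
        intro d hd1 hd2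
        have hstep : r (g (d + m)) (g (d + m + 1)) := by
          refine ⟨hadjc (d+m) (by omega) (by omega), ?_, ?_⟩
          · exact hcell (d+m) (by omega) (by omega)
          · exact hcell (d+m+1) (by omega) (by omega)
        have := Relation.ReflTransGen.tail (ih d hd1 (by omega)) hstep
        rwa [show d + (m+1) = d + m + 1 by omega]
    intro c hc d hd
    rw [hskew_eq] at hc hd
    obtain ⟨d1, hd1, rfl⟩ := hc
    obtain ⟨d2, hd2, rfl⟩ := hd
    simp only [Set.mem_Icc] at hd1 hd2
    rcases le_or_gt d1 d2 with hle | hlt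
    · have := hchain (d2 - d1) d1 hd1.1 (by omega)
      rwa [show d1 + (d2 - d1) = d2 by omega] at this
    · have := hchain (d1 - d2) d2 hd2.1 (by omega)
      rw [show d2 + (d1 - d2) = d1 by omega] at this
      exact (@Relation.ReflTransGen.stdSymm _ r ⟨fun a b h => hrsym h⟩).symm _ _ this
  have hinj : Set.InjOn diagVal (skewDiag μ ν) := by
    intro c hc c' hc' heq
    rw [hskew_eq] at hc hc'
    obtain ⟨d1, hd1, rfl⟩ := hc
    obtain ⟨d2, hd2, rfl⟩ := hc'
    simp only [Set.mem_Icc] at hd1 hd2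
    rw [hdg d1 (by omega), hdg d2 (by omega)] at heq
    rw [heq]
  exact ⟨ν, ⟨hμ, hνstrict, hsubdiag, hncard, hconn, hinj⟩, hid⟩

end Stmt6

namespace Stmt6

lemma double_construct {μ : Finset ℕ} (hμ : IsStrictPartition μ) {p q k : ℕ}
    (hq1 : 1 ≤ q) (hqp : q < p) (hpq : p + q = k) (hpμ : p ∈ μ) (hqμ : q ∈ μ) :
    ∃ ν, IsRemovableDoubleRibbon μ ν k := by
  obtain ⟨ν₁, hrib1, hid1⟩ := single_construct hμ (t := 1) (L := p) le_rfl (by omega)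
    (by rwa [show 1 + p - 1 = p by omega]) (fun h => absurd h (by omega))
  obtain ⟨_, hν₁strict, hsub1, hncard1, hconn1, hinj1⟩ := hrib1
  have hqν₁ : q ∈ ν₁ := by
    have h1 := hid1 q (by omega)
    rw [if_pos (by omega)] at h1
    have h2 := hid1 (q+1) (by omega)
    rw [if_pos (by omega)] at h2
    have h3 := mem_iff_Fc.mp hqμ
    exact mem_iff_Fc.mpr (by omega)
  obtain ⟨ν, hrib2, hid2⟩ := single_construct hν₁strict (t := 1) (L := q) le_rfl (by omega)
    (by rwa [show 1 + q - 1 = q by omega]) (fun h => absurd h (by omega))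
  obtain ⟨_, hνstrict, hsub2, hncard2, hconn2, hinj2⟩ := hrib2
  set R := skewDiag μ ν₁ with hR
  set S := skewDiag ν₁ ν with hS
  have hRfin : R.Finite := skew_finite _ _
  have hSfin : S.Finite := skew_finite _ _
  have hunion : R ∪ S = skewDiag μ ν := by
    ext x
    simp only [hR, hS, skewDiag, Set.mem_union, Set.mem_diff]
    have h1 : x ∈ shiftedDiagram ν₁ → x ∈ shiftedDiagram μ := fun h => hsub1 h
    have h2 : x ∈ shiftedDiagram ν → x ∈ shiftedDiagram ν₁ := fun h => hsub2 h
    tauto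
  have hdisj : Disjoint R S := by
    rw [Set.disjoint_left]
    intro x hx hx2
    exact hx.2 hx2.1
  have hskewcard : (skewDiag μ ν).ncard = k := by
    rw [← hunion, Set.ncard_union_eq hdisj hRfin hSfin, hncard1, hncard2]
    omega
  have hRne : R.Nonempty := by
    apply Set.nonempty_of_ncard_ne_zero
    rw [hncard1]
    omega
  have hSne : S.Nonempty := by
    apply Set.nonempty_of_ncard_ne_zero
    rw [hncard2]
    omega
  have hRtail : ∃ a, IsTail R (a, a) := by
    have hdc : ∃ j, (j, j) ∈ R := by
      rw [hR, diag_cell_iff]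
      have h1 := hid1 1 le_rfl
      rw [if_pos (by omega)] at h1
      omega
    obtain ⟨a, ha⟩ := hdc
    refine ⟨a, ha, fun d hd => ?_⟩
    have := (skew_cell_form hd).1
    have hdv : diagVal (a, a) = 1 := by simp [diagVal]
    omega
  have hStail : ∃ b, IsTail S (b, b) := by
    have hdc : ∃ j, (j, j) ∈ S := by
      rw [hS, diag_cell_iff]
      have h1 := hid2 1 le_rfl
      rw [if_pos (by omega)] at h1
      omega
    obtain ⟨b, hb⟩ := hdc
    refine ⟨b, hb, fun d hd => ?_⟩
    have := (skew_cell_form hd).1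
    have hdv : diagVal (b, b) = 1 := by simp [diagVal]
    omega
  have hmueq : shiftedDiagram ν₁ = shiftedDiagram μ \ R := by
    ext x
    simp only [hR, skewDiag, Set.mem_diff]
    have h1 : x ∈ shiftedDiagram ν₁ → x ∈ shiftedDiagram μ := fun h => hsub1 h
    tauto
  refine ⟨ν, hskewcard, R, S, hμ, hνstrict, fun x hx => hsub1 (hsub2 hx), hdisj, hunion,
    hRne, ?_, ?_, hSne, ?_, ?_, ?_, hRtail, hStail, ν₁, hν₁strict, hmueq⟩
  · rw [hR]; exact hconn1
  · rw [hR]; exact hinj1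
  · rw [hS]; exact hconn2
  · rw [hS]; exact hinj2
  · rw [hncard1, hncard2]; omega

lemma core_Lk_zero {k : ℕ} (hk : 1 ≤ k) {c : Finset ℕ} (hc : IsStrictPartition c)
    (hcore : ¬∃ nu : Finset ℕ, IsRemovableRibbon c nu k) : Lk k c = 0 := by
  have hstep1 : ∀ p ∈ c, k < p → p - k ∈ c := by
    intro p hp hkp
    by_contra hne
    obtain ⟨ν, hrib, _⟩ := single_construct hc (t := p - k + 1) (L := k) (by omega) hk
      (by rwa [show p - k + 1 + k - 1 = p by omega])
      (fun _ => by rwa [show p - k + 1 - 1 = p - k by omega])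
    exact hcore ⟨ν, Or.inl hrib⟩
  have hstep2 : k ∉ c := by
    intro hkc
    obtain ⟨ν, hrib, _⟩ := single_construct hc (t := 1) (L := k) le_rfl hk
      (by rwa [show 1 + k - 1 = k by omega]) (fun h => absurd h (by omega))
    exact hcore ⟨ν, Or.inl hrib⟩
  have hchain : ∀ p, p ∈ c → ∃ e ∈ c, e ≤ k ∧ e % k = p % k := by
    intro p
    induction p using Nat.strong_induction_on with
    | _ p ih =>
      intro hp
      rcases le_or_gt p k with hpk | hpk
      · exact ⟨p, hp, hpk, rfl⟩
      · have hmem := hstep1 p hp hpk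
        obtain ⟨e, he, hek, hemod⟩ := ih (p - k) (by omega) hmem
        refine ⟨e, he, hek, ?_⟩
        have h2 : (p - k + k) % k = (p - k) % k := Nat.add_mod_right _ _
        rw [show p - k + k = p by omega] at h2
        omega
  have hm0 : (c.filter (fun x => x % k = 0)).card = 0 := by
    rw [Finset.card_eq_zero]
    apply Finset.filter_eq_empty_iff.mpr
    intro p hp hmod
    obtain ⟨e, he, hek, hemod⟩ := hchain p hp
    rw [hmod] at hemod
    have he1 : 1 ≤ e := hc e he
    have : e = k := by
      rcases lt_or_ge e k with h | h
      · rw [Nat.mod_eq_of_lt h] at hemod; omega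
      · omega
    exact hstep2 (this ▸ he)
  have hmin : ∀ i ∈ (Finset.Ico 1 k).filter (fun i => 2 * i < k),
      min ((c.filter (fun x => x % k = i)).card) ((c.filter (fun x => x % k = k - i)).card) = 0 := by
    intro i hi
    simp only [Finset.mem_filter, Finset.mem_Ico] at hi
    obtain ⟨⟨hi1, hik⟩, hi2⟩ := hi
    by_contra hne
    have hpos1 : 0 < (c.filter (fun x => x % k = i)).card := by omega
    have hpos2 : 0 < (c.filter (fun x => x % k = k - i)).card := by omega
    obtain ⟨x1, hx1⟩ := Finset.card_pos.mp hpos1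
    obtain ⟨x2, hx2⟩ := Finset.card_pos.mp hpos2
    rw [Finset.mem_filter] at hx1 hx2
    -- get i ∈ c
    obtain ⟨e1, he1, he1k, he1mod⟩ := hchain x1 hx1.1
    rw [hx1.2] at he1mod
    have he1i : e1 = i := by
      have h1 : 1 ≤ e1 := hc e1 he1
      rcases lt_or_ge e1 k with h | h
      · rw [Nat.mod_eq_of_lt h] at he1mod; exact he1mod
      · exfalso
        have hek : e1 = k := by omega
        rw [hek, Nat.mod_self] at he1mod
        omega
    obtain ⟨e2, he2, he2k, he2mod⟩ := hchain x2 hx2.1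
    rw [hx2.2] at he2mod
    have he2i : e2 = k - i := by
      have h1 : 1 ≤ e2 := hc e2 he2
      rcases lt_or_ge e2 k with h | h
      · rw [Nat.mod_eq_of_lt h] at he2mod
        exact he2mod
      · exfalso
        have hek : e2 = k := by omega
        rw [hek, Nat.mod_self] at he2mod
        omega
    obtain ⟨ν, hdouble⟩ := double_construct hc (p := k - i) (q := i) (k := k) hi1 (by omega) (by omega)
      (he2i ▸ he2) (he1i ▸ he1)
    exact hcore ⟨ν, Or.inr hdouble⟩
  unfold Lk
  rw [hm0, Finset.sum_eq_zero hmin]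
  omega

open Classical in
lemma telescope {k : ℕ} (hk : 1 ≤ k) (f : ℕ → Finset ℕ) :
    ∀ n, (∀ i < n, IsRemovableRibbon (f (i+1)) (f i) k) →
      Lk k (f n) = Lk k (f 0)
        + ((Finset.range n).filter (fun i => ∃ j, (j, j) ∈ skewDiag (f (i+1)) (f i))).card := by
  intro n
  induction n with
  | zero => intro _; simp
  | succ m ih =>
    intro hstep
    have h1 := ih (fun i hi => hstep i (by omega))
    have h2 := step_lemma hk (hstep m (by omega))
    rw [Finset.range_add_one, Finset.filter_insert]
    by_cases hP : ∃ j, (j, j) ∈ skewDiag (f (m+1)) (f m)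
    · rw [if_pos hP] at h2
      rw [if_pos hP, Finset.card_insert_of_notMem (by simp)]
      omega
    · rw [if_neg hP] at h2
      rw [if_neg hP]
      omega

end Stmt6

/-- Every standard shifted `k`-ribbon tableau of shape `λ` has the same
number of ribbons meeting the main diagonal, namely
`m₀ + ∑_{1 ≤ i < k/2} min (mᵢ, m_{k-i})` where `m_j` is the number of parts of `λ`
congruent to `j` mod `k`. -/
theorem stmt6 (k : ℕ) (hk : 1 ≤ k) (lam : Finset ℕ) (hlam : IsStrictPartition lam)
    (n : ℕ) (f : ℕ → Finset ℕ) (hT : IsStandardRibbonTableau k lam n f) :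
    {i : ℕ | i < n ∧ ∃ j : ℕ, (j, j) ∈ skewDiag (f (i + 1)) (f i)}.ncard
      = (lam.filter (fun p => p % k = 0)).card
        + ∑ i ∈ (Finset.Ico 1 k).filter (fun i => 2 * i < k),
            min ((lam.filter (fun p => p % k = i)).card)
                ((lam.filter (fun p => p % k = k - i)).card) := by
  classical
  obtain ⟨h0strict, h0core, hfn, hsteps⟩ := hT
  have htel := Stmt6.telescope hk f n hsteps
  have hzero := Stmt6.core_Lk_zero hk h0strict h0core
  have hset : {i : ℕ | i < n ∧ ∃ j : ℕ, (j, j) ∈ skewDiag (f (i + 1)) (f i)}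
      = ↑((Finset.range n).filter (fun i => ∃ j, (j, j) ∈ skewDiag (f (i+1)) (f i))) := by
    ext i
    simp only [Set.mem_setOf_eq, Finset.coe_filter, Finset.mem_range]
  rw [hset, Set.ncard_coe_finset]
  rw [hfn] at htel
  unfold Stmt6.Lk at htel hzero
  omega
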